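/- (Example 2, normality of the minimizer.) Let ȳ₁(s) = 1 for s ∈ [0,1] and ȳ₁(s) = 2−s for s ∈ [1,2], and ȳ₂ ≡ 0 on [0,2]. Let p₀ ∈ ℝ, λ ≥ 0, and (p₁,p₂,p₃) ∈ W^{1,1}([0,2];ℝ³) satisfy: dp₁/ds = 0 and dp₃/ds = 0 a.e.; dp₂/ds(s) = −p₂(s) for a.e. s ∈ [0,1] and dp₂/ds(s) = p₃(s) for a.e. s ∈ [1,2]; the transversality condition −(p₁,p₂,p₃)(2) = (−λ+α, β, γ) for some α, β, γ ≥ 0; and for a.e. s ∈ [0,2] the maximum condition p₀·χ_{[0,1]}(s) − p₁(s)·χ_{[1,2]}(s) = max over (w₀,w₁,w₂) with w₀ ≥ 0 and w₀ + |(w₁,w₂)| = 1 of { p₀w₀ + p₁(s)w₁ + p₂(s)(ȳ₂(s)w₀ + w₂) + p₃(s)(ȳ₂(s)w₁ − ȳ₁(s)w₂) } = 0. Then p₀ = 0, p₁ ≡ 0, p₂ ≡ 0, p₃ ≡ 0 and λ = α; in particular, if (p₁,p₂,p₃,λ) ≠ 0 then λ > 0. -/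

import Mathlib

open MeasureTheory Set

noncomputable section

/-- The characteristic function `χ_A` of a set `A ⊆ ℝ`. -/
def chi (A : Set ℝ) (s : ℝ) : ℝ := A.indicator (fun _ => (1:ℝ)) s

lemma exists_in_Ioo_of_ae {P : ℝ → Prop} (h : ∀ᵐ s ∂(volume : Measure ℝ), P s)
    {a b : ℝ} (hab : a < b) : ∃ s, a < s ∧ s < b ∧ P s := by
  by_contra hc
  push_neg at hc
  rw [MeasureTheory.ae_iff] at h
  have hsub : Ioo a b ⊆ {s | ¬ P s} := fun s hs => hc s hs.1 hs.2
  have h0 := measure_mono_null hsub h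
  rw [Real.volume_Ioo] at h0
  rw [ENNReal.ofReal_eq_zero] at h0
  linarith

/-- **Example 2, normality of the minimizer.**
With `ȳ₁ = χ_{[0,1]} + (2-s)χ_{(1,2]}`, `ȳ₂ ≡ 0`, any multipliers
`p₀ ∈ ℝ`, `λ ≥ 0`, `(p₁,p₂,p₃) ∈ W^{1,1}([0,2];ℝ³)` satisfying the adjoint equations
`dp₁/ds = 0`, `dp₃/ds = 0`, `dp₂/ds = -p₂` on `[0,1]`, `dp₂/ds = p₃` on `[1,2]`,
the transversality condition `-(p₁,p₂,p₃)(2) = (-λ+α, β, γ)` with `α,β,γ ≥ 0`, and the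
maximum condition, must satisfy `p₀ = 0`, `p₁ ≡ 0`, `p₂ ≡ 0`, `p₃ ≡ 0` and `λ = α`;
in particular if `(p₁,p₂,p₃,λ) ≠ 0` then `λ > 0`. -/
theorem example2_normality
    (ybar1 ybar2 : ℝ → ℝ)
    (hybar1 : ∀ s, ybar1 s = if s ≤ 1 then 1 else 2 - s)
    (hybar2 : ∀ s, ybar2 s = 0)
    (p0 lam : ℝ) (hlam : 0 ≤ lam)
    (p1 p2 p3 q1 q2 q3 : ℝ → ℝ)
    (hq1int : IntervalIntegrable q1 volume 0 2)
    (hq2int : IntervalIntegrable q2 volume 0 2)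
    (hq3int : IntervalIntegrable q3 volume 0 2)
    (hp1ac : ∀ s ∈ Icc (0:ℝ) 2, p1 s = p1 0 + ∫ r in (0:ℝ)..s, q1 r)
    (hp2ac : ∀ s ∈ Icc (0:ℝ) 2, p2 s = p2 0 + ∫ r in (0:ℝ)..s, q2 r)
    (hp3ac : ∀ s ∈ Icc (0:ℝ) 2, p3 s = p3 0 + ∫ r in (0:ℝ)..s, q3 r)
    (hq1 : ∀ᵐ s ∂(volume : Measure ℝ), s ∈ Icc (0:ℝ) 2 → q1 s = 0)
    (hq3 : ∀ᵐ s ∂(volume : Measure ℝ), s ∈ Icc (0:ℝ) 2 → q3 s = 0)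
    (hq2 : ∀ᵐ s ∂(volume : Measure ℝ),
      (s ∈ Icc (0:ℝ) 1 → q2 s = -(p2 s)) ∧ (s ∈ Icc (1:ℝ) 2 → q2 s = p3 s))
    (α β γ : ℝ) (hα : 0 ≤ α) (hβ : 0 ≤ β) (hγ : 0 ≤ γ)
    (htrans : (-(p1 2), -(p2 2), -(p3 2)) = (-lam + α, β, γ))
    (hmax : ∀ᵐ s ∂(volume : Measure ℝ), s ∈ Icc (0:ℝ) 2 →
      (p0 * chi (Icc 0 1) s - p1 s * chi (Icc 1 2) s = 0) ∧
      IsGreatest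
        {val : ℝ | ∃ w0 w1 w2 : ℝ, 0 ≤ w0 ∧ w0 + Real.sqrt (w1^2 + w2^2) = 1 ∧
          val = p0 * w0 + p1 s * w1 + p2 s * (ybar2 s * w0 + w2)
            + p3 s * (ybar2 s * w1 - ybar1 s * w2)}
        (p0 * chi (Icc 0 1) s - p1 s * chi (Icc 1 2) s)) :
    p0 = 0 ∧ (∀ s ∈ Icc (0:ℝ) 2, p1 s = 0 ∧ p2 s = 0 ∧ p3 s = 0) ∧ lam = α ∧
    (¬ ((∀ s ∈ Icc (0:ℝ) 2, p1 s = 0 ∧ p2 s = 0 ∧ p3 s = 0) ∧ lam = 0) →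
      0 < lam) := by
  -- uIoc inclusion helper
  have h02 : ∀ {s : ℝ}, s ∈ Icc (0:ℝ) 2 → Set.uIoc (0:ℝ) s ⊆ Icc (0:ℝ) 2 := by
    intro s hs r hr
    rw [Set.uIoc_of_le hs.1] at hr
    exact ⟨le_of_lt hr.1, hr.2.trans hs.2⟩
  -- p1 and p3 are constant
  have hc1 : ∀ s ∈ Icc (0:ℝ) 2, p1 s = p1 0 := by
    intro s hs
    rw [hp1ac s hs]
    have hz : ∫ r in (0:ℝ)..s, q1 r = ∫ r in (0:ℝ)..s, (0:ℝ) := by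
      apply intervalIntegral.integral_congr_ae
      filter_upwards [hq1] with r hr hrmem
      exact hr (h02 hs hrmem)
    rw [hz]; simp
  have hc3 : ∀ s ∈ Icc (0:ℝ) 2, p3 s = p3 0 := by
    intro s hs
    rw [hp3ac s hs]
    have hz : ∫ r in (0:ℝ)..s, q3 r = ∫ r in (0:ℝ)..s, (0:ℝ) := by
      apply intervalIntegral.integral_congr_ae
      filter_upwards [hq3] with r hr hrmem
      exact hr (h02 hs hrmem)
    rw [hz]; simp
  -- key pointwise consequences of the maximum condition
  have hkey : ∀ᵐ s ∂(volume : Measure ℝ), s ∈ Icc (0:ℝ) 2 →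
      (p0 * chi (Icc 0 1) s - p1 s * chi (Icc 1 2) s = 0) ∧ p1 s = 0 ∧
      p2 s = p3 s * ybar1 s := by
    filter_upwards [hmax] with s hs hsmem
    obtain ⟨hzero, hmem, hub⟩ := hs hsmem
    have h1m : ∃ w0 w1 w2 : ℝ, 0 ≤ w0 ∧ w0 + Real.sqrt (w1^2 + w2^2) = 1 ∧
        (p1 s) = p0 * w0 + p1 s * w1 + p2 s * (ybar2 s * w0 + w2)
          + p3 s * (ybar2 s * w1 - ybar1 s * w2) :=
      ⟨0, 1, 0, le_rfl, by norm_num, by rw [hybar2]; ring⟩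
    have h1 : (p1 s) ≤ p0 * chi (Icc 0 1) s - p1 s * chi (Icc 1 2) s := hub h1m
    have h2m : ∃ w0 w1 w2 : ℝ, 0 ≤ w0 ∧ w0 + Real.sqrt (w1^2 + w2^2) = 1 ∧
        (-(p1 s)) = p0 * w0 + p1 s * w1 + p2 s * (ybar2 s * w0 + w2)
          + p3 s * (ybar2 s * w1 - ybar1 s * w2) :=
      ⟨0, -1, 0, le_rfl, by norm_num, by rw [hybar2]; ring⟩
    have h2 : (-(p1 s)) ≤ p0 * chi (Icc 0 1) s - p1 s * chi (Icc 1 2) s := hub h2m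
    have h3m : ∃ w0 w1 w2 : ℝ, 0 ≤ w0 ∧ w0 + Real.sqrt (w1^2 + w2^2) = 1 ∧
        (p2 s - p3 s * ybar1 s) = p0 * w0 + p1 s * w1 + p2 s * (ybar2 s * w0 + w2)
          + p3 s * (ybar2 s * w1 - ybar1 s * w2) :=
      ⟨0, 0, 1, le_rfl, by norm_num, by rw [hybar2]; ring⟩
    have h3 : (p2 s - p3 s * ybar1 s) ≤ p0 * chi (Icc 0 1) s - p1 s * chi (Icc 1 2) s := hub h3m
    have h4m : ∃ w0 w1 w2 : ℝ, 0 ≤ w0 ∧ w0 + Real.sqrt (w1^2 + w2^2) = 1 ∧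
        (-(p2 s - p3 s * ybar1 s)) = p0 * w0 + p1 s * w1 + p2 s * (ybar2 s * w0 + w2)
          + p3 s * (ybar2 s * w1 - ybar1 s * w2) :=
      ⟨0, 0, -1, le_rfl, by norm_num, by rw [hybar2]; ring⟩
    have h4 : (-(p2 s - p3 s * ybar1 s)) ≤ p0 * chi (Icc 0 1) s - p1 s * chi (Icc 1 2) s := hub h4m
    rw [hzero] at h1 h2 h3 h4
    exact ⟨hzero, le_antisymm h1 (by linarith), by linarith⟩
  -- pick two points in (0,1)
  obtain ⟨t1, ht10, ht11, hP1⟩ := exists_in_Ioo_of_ae hkey (show (0:ℝ) < 1/2 by norm_num)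
  obtain ⟨t2, ht20, ht21, hP2⟩ := exists_in_Ioo_of_ae hkey (show (1:ℝ)/2 < 1 by norm_num)
  have ht1m : t1 ∈ Icc (0:ℝ) 2 := ⟨le_of_lt ht10, by linarith⟩
  have ht2m : t2 ∈ Icc (0:ℝ) 2 := ⟨by linarith, by linarith⟩
  obtain ⟨hz1, hp1t1, hp2t1⟩ := hP1 ht1m
  obtain ⟨hz2, hp1t2, hp2t2⟩ := hP2 ht2m
  -- p0 = 0
  have hp0 : p0 = 0 := by
    have hm1 : t1 ∈ Icc (0:ℝ) 1 := ⟨le_of_lt ht10, by linarith⟩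
    have hm2 : t1 ∉ Icc (1:ℝ) 2 := fun hmem => by have := hmem.1; linarith
    have ct1 : chi (Icc 0 1) t1 = 1 := by
      unfold chi; exact Set.indicator_of_mem hm1 _
    have ct2 : chi (Icc 1 2) t1 = 0 := by
      unfold chi; exact Set.indicator_of_notMem hm2 _
    rw [ct1, ct2] at hz1
    linarith
  -- p1 0 = 0
  have hp1_0 : p1 0 = 0 := by rw [← hc1 t1 ht1m]; exact hp1t1
  -- formula for p2 on [0,1]
  have hint1 : ∀ s ∈ Icc (0:ℝ) 1, p2 s = p2 0 - p3 0 * s := by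
    intro s hs
    have hs2 : s ∈ Icc (0:ℝ) 2 := ⟨hs.1, hs.2.trans (by norm_num)⟩
    rw [hp2ac s hs2]
    have hz : ∫ r in (0:ℝ)..s, q2 r = ∫ r in (0:ℝ)..s, (-(p3 0)) := by
      apply intervalIntegral.integral_congr_ae
      filter_upwards [hq2, hkey] with r hr hkr hrmem
      rw [Set.uIoc_of_le hs.1] at hrmem
      have hr01 : r ∈ Icc (0:ℝ) 1 := ⟨le_of_lt hrmem.1, hrmem.2.trans hs.2⟩
      have hr02 : r ∈ Icc (0:ℝ) 2 := ⟨hr01.1, hr01.2.trans one_le_two⟩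
      rw [hr.1 hr01, (hkr hr02).2.2, hc3 r hr02, hybar1, if_pos hr01.2]
      ring
    rw [hz, intervalIntegral.integral_const, smul_eq_mul]
    ring
  -- p3 0 = 0 and p2 0 = 0
  have e1 : p2 0 - p3 0 * t1 = p3 0 := by
    have ht1i : t1 ∈ Icc (0:ℝ) 1 := ⟨le_of_lt ht10, by linarith⟩
    rw [← hint1 t1 ht1i, hp2t1, hc3 t1 ht1m, hybar1, if_pos ht1i.2]
    ring
  have e2 : p2 0 - p3 0 * t2 = p3 0 := by
    have ht2i : t2 ∈ Icc (0:ℝ) 1 := ⟨by linarith, le_of_lt ht21⟩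
    rw [← hint1 t2 ht2i, hp2t2, hc3 t2 ht2m, hybar1, if_pos ht2i.2]
    ring
  have hfac : p3 0 * (t2 - t1) = 0 := by rw [mul_sub]; linarith
  have hc30 : p3 0 = 0 := by
    rcases mul_eq_zero.mp hfac with h | h
    · exact h
    · exfalso; have : t1 < t2 := by linarith
      linarith
  have hp20 : p2 0 = 0 := by
    rw [hc30] at e1; linarith
  -- p2 ≡ 0 on [0,2]
  have hp2all : ∀ s ∈ Icc (0:ℝ) 2, p2 s = 0 := by
    intro s hs
    rw [hp2ac s hs, hp20]
    have hz : ∫ r in (0:ℝ)..s, q2 r = ∫ r in (0:ℝ)..s, (0:ℝ) := by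
      apply intervalIntegral.integral_congr_ae
      filter_upwards [hq2, hkey] with r hr hkr hrmem
      have hr02 : r ∈ Icc (0:ℝ) 2 := h02 hs hrmem
      by_cases hr1 : r ≤ 1
      · rw [hr.1 ⟨hr02.1, hr1⟩, (hkr hr02).2.2, hc3 r hr02, hc30]
        ring
      · rw [hr.2 ⟨le_of_not_ge hr1, hr02.2⟩, hc3 r hr02, hc30]
    rw [hz]; simp
  -- all multipliers vanish
  have hall : ∀ s ∈ Icc (0:ℝ) 2, p1 s = 0 ∧ p2 s = 0 ∧ p3 s = 0 := by
    intro s hs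
    refine ⟨by rw [hc1 s hs, hp1_0], hp2all s hs, by rw [hc3 s hs, hc30]⟩
  -- lam = α
  have h2m : (2:ℝ) ∈ Icc (0:ℝ) 2 := ⟨by norm_num, le_refl 2⟩
  have hp12 : p1 2 = 0 := (hall 2 h2m).1
  simp only [Prod.mk.injEq] at htrans
  have hlamα : lam = α := by
    have := htrans.1
    rw [hp12] at this
    linarith
  refine ⟨hp0, hall, hlamα, ?_⟩
  intro hne
  rcases eq_or_lt_of_le hlam with h | h
  · exact absurd ⟨hall, h.symm⟩ hne
  · exact h
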